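/- In the root system of type C_l with fundamental roots r_1,...,r_l (long root r_l), the Coxeter element w = w_1 w_2 ... w_l satisfies w(r_i) = r_{i+1} for 1 ≤ i ≤ l-2 and w(r_{l-1}) = r_1 + r_2 + ... + r_l. -/
import Mathlib


open Matrix

/-- The standard basis vector `e k` of `ℝ^n` (0-indexed). -/
noncomputable def basisVec (n k : ℕ) : Fin n → ℝ := fun j => if (j : ℕ) = k then 1 else 0

/-- Reflection through the hyperplane perpendicular to `v`. -/
noncomputable def reflect {n : ℕ} (v : Fin n → ℝ) (x : Fin n → ℝ) : Fin n → ℝ :=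
  x - (2 * (v ⬝ᵥ x) / (v ⬝ᵥ v)) • v

lemma dot_basis {l : ℕ} (k : ℕ) (hk : k < l) (x : Fin l → ℝ) :
    basisVec l k ⬝ᵥ x = x ⟨k, hk⟩ := by
  simp only [dotProduct, basisVec]
  rw [Finset.sum_eq_single (⟨k, hk⟩ : Fin l)]
  · simp
  · intro b _ hb
    have : (b : ℕ) ≠ k := fun h => hb (Fin.ext h)
    simp [this]
  · simp

lemma reflect_swap {l : ℕ} (a b : ℕ) (ha : a < l) (hb : b < l) (hab : a ≠ b)
    (x : Fin l → ℝ) (j : Fin l) :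
    reflect (basisVec l a - basisVec l b) x j =
      if (j : ℕ) = a then x ⟨b, hb⟩ else if (j : ℕ) = b then x ⟨a, ha⟩ else x j := by
  have hdot : (basisVec l a - basisVec l b) ⬝ᵥ x = x ⟨a, ha⟩ - x ⟨b, hb⟩ := by
    rw [sub_dotProduct, dot_basis a ha, dot_basis b hb]
  have hnorm : (basisVec l a - basisVec l b) ⬝ᵥ (basisVec l a - basisVec l b) = 2 := by
    rw [sub_dotProduct, dot_basis a ha, dot_basis b hb]
    simp [basisVec, hab, Ne.symm hab]
    try norm_num
  simp only [reflect, Pi.sub_apply, Pi.smul_apply, smul_eq_mul, hdot, hnorm, basisVec]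
  rcases eq_or_ne (j : ℕ) a with h | h
  · have : j = ⟨a, ha⟩ := Fin.ext h
    subst this
    simp [hab]
    try ring
  · rcases eq_or_ne (j : ℕ) b with h' | h'
    · have : j = ⟨b, hb⟩ := Fin.ext h'
      subst this
      simp [Ne.symm hab, h]
      try ring
    · simp [h, h']

lemma reflect_neg {l : ℕ} (hl : 0 < l) (x : Fin l → ℝ) (j : Fin l) :
    reflect ((2 : ℝ) • basisVec l (l - 1)) x j = if (j : ℕ) = l - 1 then -x j else x j := by
  have hlt : l - 1 < l := by omega
  have hdot : ((2 : ℝ) • basisVec l (l - 1)) ⬝ᵥ x = 2 * x ⟨l - 1, hlt⟩ := by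
    rw [smul_dotProduct, dot_basis (l - 1) hlt]; simp
  have hnorm : ((2 : ℝ) • basisVec l (l - 1)) ⬝ᵥ ((2 : ℝ) • basisVec l (l - 1)) = 4 := by
    rw [smul_dotProduct, dot_basis (l - 1) hlt]
    simp [basisVec]
    try norm_num
  simp only [reflect, Pi.sub_apply, Pi.smul_apply, smul_eq_mul, hdot, hnorm, basisVec]
  rcases eq_or_ne (j : ℕ) (l - 1) with h | h
  · have : j = ⟨l - 1, hlt⟩ := Fin.ext h
    subst this
    simp
    ring
  · simp [h]

lemma fold_formula (l : ℕ) (hl : 2 ≤ l) (r : ℕ → Fin l → ℝ)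
    (hr : ∀ i, 1 ≤ i → i ≤ l - 1 → r i = basisVec l (i - 1) - basisVec l i)
    (hrl : r l = (2 : ℝ) • basisVec l (l - 1)) :
    ∀ d, d ≤ l → ∀ (x : Fin l → ℝ) (j : Fin l),
      ((List.range' (l - d) d).foldr (fun k f => reflect (r (k + 1)) ∘ f) id x) j =
        if (j : ℕ) < l - d then x j
        else if (j : ℕ) = l - d then -x ⟨l - 1, by omega⟩
        else x ⟨(j : ℕ) - 1, by omega⟩ := by
  intro d
  induction d with
  | zero =>
    intro _ x j
    simp only [List.range', List.foldr, id]
    rw [if_pos (by omega : (j : ℕ) < l - 0)]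
  | succ d ih =>
    intro hd x j
    have e0 : l - (d + 1) + 1 = l - d := by omega
    have hrange : List.range' (l - (d + 1)) (d + 1)
        = (l - (d + 1)) :: List.range' (l - d) d := by
      rw [List.range'_succ, e0]
    rw [hrange]
    simp only [List.foldr_cons, Function.comp_apply]
    set y := (List.range' (l - d) d).foldr (fun k f => reflect (r (k + 1)) ∘ f) id x with hy
    have hiy : ∀ (j : Fin l), y j =
        if (j : ℕ) < l - d then x j
        else if (j : ℕ) = l - d then -x ⟨l - 1, by omega⟩
        else x ⟨(j : ℕ) - 1, by omega⟩ := ih (by omega) x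
    rcases Nat.eq_zero_or_pos d with hd0 | hd0
    · subst hd0
      have hl1 : l - (0 + 1) + 1 = l := by omega
      rw [hl1, hrl, reflect_neg (by omega : 0 < l)]
      have hyj : ∀ jj : Fin l, y jj = x jj := by
        intro jj; rw [hiy, if_pos (by omega)]
      simp only [hyj]
      rcases eq_or_ne (j : ℕ) (l - 1) with h | h
      · rw [if_pos h, if_neg (by omega), if_pos (by omega)]
        have hj : j = (⟨l - 1, by omega⟩ : Fin l) := Fin.ext h
        rw [hj]
      · rw [if_neg h, if_pos (by omega)]
    · -- d ≥ 1, so l - (d+1) + 1 ≤ l - 1 : short root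
      have h1 : (1 : ℕ) ≤ l - (d + 1) + 1 := by omega
      have h2 : l - (d + 1) + 1 ≤ l - 1 := by omega
      rw [hr _ h1 h2]
      have e1 : l - (d + 1) + 1 - 1 = l - (d + 1) := by omega
      rw [e1]
      rw [reflect_swap (l - (d + 1)) (l - (d + 1) + 1) (by omega) (by omega) (by omega)]
      have hA : y ⟨l - (d + 1) + 1, by omega⟩ = -x ⟨l - 1, by omega⟩ := by
        rw [hiy]
        rw [if_neg (by simp; omega), if_pos (by simp; omega)]
      have hB : y ⟨l - (d + 1), by omega⟩ = x ⟨l - (d + 1), by omega⟩ := by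
        rw [hiy]
        rw [if_pos (by simp; omega)]
      rw [hA, hB, hiy j]
      rcases eq_or_ne (j : ℕ) (l - (d + 1)) with h | h
      · rw [if_pos h, if_neg (by omega), if_pos (by omega)]
      · rw [if_neg h]
        rcases eq_or_ne (j : ℕ) (l - (d + 1) + 1) with h' | h'
        · rw [if_pos h', if_neg (by omega), if_neg (by omega)]
          congr 1
          exact Fin.ext (by simp; omega)
        · rw [if_neg h']
          rcases Nat.lt_or_ge (j : ℕ) (l - d) with hlt | hge
          · rw [if_pos (by omega), if_pos (by omega)]
          · rw [if_neg (by omega), if_neg (by omega), if_neg (by omega), if_neg (by omega)]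

/-- Type `C_l`, realized in `ℝ^l` with fundamental roots `r i = e_{i-1} - e_i` for
`1 ≤ i ≤ l-1` and the long root `r l = 2 e_{l-1}` (double bond between `r_{l-1}` and
`r_l`).  The Coxeter element `w = w_1 w_2 ⋯ w_l` satisfies `w (r i) = r (i+1)` for
`1 ≤ i ≤ l-2` and `w (r_{l-1}) = r_1 + r_2 + ⋯ + r_l`. -/
theorem stmt_7 (l : ℕ) (hl : 2 ≤ l)
    (r : ℕ → Fin l → ℝ)
    (hr : ∀ i, 1 ≤ i → i ≤ l - 1 → r i = basisVec l (i - 1) - basisVec l i)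
    (hrl : r l = (2 : ℝ) • basisVec l (l - 1))
    (w : (Fin l → ℝ) → (Fin l → ℝ))
    (hw : w = (List.range l).foldr (fun k f => reflect (r (k + 1)) ∘ f) id) :
    (∀ i, 1 ≤ i → i ≤ l - 2 → w (r i) = r (i + 1)) ∧
    w (r (l - 1)) = ∑ k ∈ Finset.Icc 1 l, r k := by
  have hwf : ∀ (x : Fin l → ℝ) (j : Fin l),
      w x j = if (j : ℕ) = 0 then -x ⟨l - 1, by omega⟩ else x ⟨(j : ℕ) - 1, by omega⟩ := by
    intro x j
    have h := fold_formula l hl r hr hrl l le_rfl x j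
    rw [Nat.sub_self, if_neg (by omega)] at h
    rw [hw, List.range_eq_range']
    exact h
  constructor
  · intro i hi1 hi2
    funext j
    rw [hwf, hr i hi1 (by omega), hr (i + 1) (by omega) (by omega)]
    simp only [Pi.sub_apply, basisVec, Nat.add_sub_cancel]
    split_ifs
    all_goals first
      | (norm_num; done)
      | (exfalso; omega)
  · have hsum : (∑ k ∈ Finset.Icc 1 l, r k) = basisVec l 0 + basisVec l (l - 1) := by
      rw [← Finset.Ico_add_one_right_eq_Icc, Finset.sum_Ico_eq_sum_range]
      have e : l + 1 - 1 = (l - 1) + 1 := by omega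
      rw [e, Finset.sum_range_succ]
      have hlast : r (1 + (l - 1)) = (2 : ℝ) • basisVec l (l - 1) := by
        rw [show 1 + (l - 1) = l from by omega, hrl]
      rw [hlast]
      have hmain : ∑ i ∈ Finset.range (l - 1), r (1 + i)
          = ∑ i ∈ Finset.range (l - 1), (basisVec l i - basisVec l (i + 1)) := by
        refine Finset.sum_congr rfl fun i hi => ?_
        rw [Finset.mem_range] at hi
        rw [hr (1 + i) (by omega) (by omega), show 1 + i - 1 = i from by omega,
          show 1 + i = i + 1 from by omega]
      rw [hmain, Finset.sum_range_sub' (fun i => basisVec l i)]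
      rw [two_smul]
      abel
    rw [hsum]
    funext j
    rw [hwf, hr (l - 1) (by omega) (by omega)]
    simp only [Pi.sub_apply, Pi.add_apply, basisVec]
    split_ifs
    all_goals first
      | (norm_num; done)
      | (exfalso; omega)
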